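/- For every integer k ≥ 2 and every finite simple graph G with maximum degree at most 1, f_k(G) ≤ ⌊(k − 1)/2⌋; moreover for every k ≥ 3 there exists a graph G with maximum degree exactly 1 and f_k(G) = ⌊(k − 1)/2⌋ (namely ⌊(k−1)/2⌋ disjoint copies of K₂). -/

import Mathlib

open Finset

variable {V : Type*}

open scoped Classical in
/-- Degree of `v` in the subgraph of `G` induced on the vertex set `A`
(number of neighbours of `v` inside `A`). -/
noncomputable def degOn (G : SimpleGraph V) (A : Finset V) (v : V) : ℕ :=
  (A.filter fun w => G.Adj v w).card

/-- Maximum degree of the subgraph of `G` induced on `A`. -/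
noncomputable def maxDegOn (G : SimpleGraph V) (A : Finset V) : ℕ :=
  A.sup (degOn G A)

open scoped Classical in
/-- The subgraph of `G` induced on `A` has fewer than `k` vertices or at least `k`
vertices realising its maximum degree. -/
def equates (G : SimpleGraph V) (k : ℕ) (A : Finset V) : Prop :=
  A.card < k ∨ k ≤ (A.filter fun v => degOn G A v = maxDegOn G A).card

open scoped Classical in
/-- `f_k` of the subgraph of `G` induced on `A`: the minimum number of vertices of `A`
whose deletion leaves an induced subgraph with fewer than `k` vertices or with at
least `k` vertices realising its maximum degree. -/
noncomputable def fkOn (G : SimpleGraph V) (k : ℕ) (A : Finset V) : ℕ :=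
  sInf {m | ∃ S, S ⊆ A ∧ S.card = m ∧ equates G k (A \ S)}

/-- `f_k(G)`. -/
noncomputable def fk [Fintype V] (G : SimpleGraph V) (k : ℕ) : ℕ :=
  fkOn G k Finset.univ

/-- `diff` of the subgraph of `G` induced on `A`: the largest degree minus the
second-largest degree (with multiplicity) of this subgraph. -/
noncomputable def diffOn (G : SimpleGraph V) (A : Finset V) : ℕ :=
  maxDegOn G A - ((A.val.map (degOn G A)).erase (maxDegOn G A)).sup

/-- `diff(G) = d₁ - d₂`, the difference between the largest and second-largest
vertex degrees of `G`. -/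
noncomputable def diffDeg [Fintype V] (G : SimpleGraph V) : ℕ :=
  diffOn G Finset.univ

universe u

open scoped Classical in
lemma part1_aux (k : ℕ) (hk : 2 ≤ k) (V : Type u) [Fintype V] (G : SimpleGraph V)
    (hG : maxDegOn G Finset.univ ≤ 1) : fk G k ≤ (k - 1) / 2 := by
  have hdeg : ∀ v : V, degOn G Finset.univ v ≤ 1 := fun v =>
    le_trans (Finset.le_sup (mem_univ v)) hG
  set D : Finset V := Finset.univ.filter (fun v => degOn G Finset.univ v = 1) with hDdef
  -- basic fact: a vertex adjacent to something has degree exactly 1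
  have hdeg1 : ∀ v w : V, G.Adj v w → degOn G Finset.univ v = 1 := by
    intro v w hvw
    refine le_antisymm (hdeg v) ?_
    rw [degOn]
    exact Finset.card_pos.mpr ⟨w, by simp [hvw]⟩
  by_cases hD : k ≤ D.card
  · -- already at least k vertices of max degree
    have hDne : D.Nonempty := Finset.card_pos.mp (by omega)
    obtain ⟨v0, hv0⟩ := hDne
    have hv0' : degOn G Finset.univ v0 = 1 := (Finset.mem_filter.mp hv0).2
    have hmax : maxDegOn G Finset.univ = 1 := by
      refine le_antisymm hG ?_
      rw [maxDegOn, ← hv0']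
      exact Finset.le_sup (mem_univ v0)
    have heq : equates G k (Finset.univ \ (∅ : Finset V)) := by
      right
      rw [Finset.sdiff_empty, hmax]
      exact le_trans hD (le_of_eq rfl)
    have : fk G k ≤ 0 := by
      rw [fk, fkOn]
      exact Nat.sInf_le ⟨∅, Finset.empty_subset _, Finset.card_empty, heq⟩
    omega
  · push_neg at hD
    -- the neighbour function
    set nbr : V → V := fun v => if h : ∃ w, G.Adj v w then h.choose else v with hnbr
    have adj_nbr : ∀ v w : V, G.Adj v w → G.Adj v (nbr v) := by
      intro v w hvw
      rw [hnbr]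
      simp only
      rw [dif_pos ⟨w, hvw⟩]
      exact (⟨w, hvw⟩ : ∃ w, G.Adj v w).choose_spec
    have nbr_uniq : ∀ v w : V, G.Adj v w → nbr v = w := by
      intro v w hvw
      have h1 : degOn G Finset.univ v = 1 := hdeg1 v w hvw
      rw [degOn] at h1
      have hle : (Finset.univ.filter fun x => G.Adj v x).card ≤ 1 := le_of_eq h1
      have h2 := Finset.card_le_one.mp hle (nbr v) (by simp [adj_nbr v w hvw]) w (by simp [hvw])
      exact h2
    have nbr_adj : ∀ v : V, v ∈ D → G.Adj v (nbr v) := by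
      intro v hv
      have h1 : degOn G Finset.univ v = 1 := (Finset.mem_filter.mp hv).2
      rw [degOn] at h1
      obtain ⟨w, hw⟩ := Finset.card_pos.mp (by omega : 0 < (Finset.univ.filter fun x => G.Adj v x).card)
      exact adj_nbr v w (Finset.mem_filter.mp hw).2
    have nbr_invol : ∀ v : V, v ∈ D → nbr (nbr v) = v := by
      intro v hv
      exact nbr_uniq (nbr v) v (nbr_adj v hv).symm
    have nbr_memD : ∀ v : V, v ∈ D → nbr v ∈ D := by
      intro v hv
      exact Finset.mem_filter.mpr ⟨mem_univ _, hdeg1 (nbr v) v (nbr_adj v hv).symm⟩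
    -- a linear order via an equivalence with Fin
    set e : V ≃ Fin (Fintype.card V) := Fintype.equivFin V with he
    set S : Finset V := D.filter (fun v => e v < e (nbr v)) with hSdef
    set S' : Finset V := D.filter (fun v => e (nbr v) < e v) with hS'def
    have hne : ∀ v : V, v ∈ D → e v ≠ e (nbr v) := by
      intro v hv h
      exact (G.ne_of_adj (nbr_adj v hv)) (e.injective h)
    have hunion : D = S ∪ S' := by
      ext v
      simp only [hSdef, hS'def, Finset.mem_union, Finset.mem_filter]
      constructor
      · intro hv
        rcases lt_trichotomy (e v) (e (nbr v)) with h | h | h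
        · exact Or.inl ⟨hv, h⟩
        · exact absurd h (hne v hv)
        · exact Or.inr ⟨hv, h⟩
      · rintro (⟨hv, _⟩ | ⟨hv, _⟩) <;> exact hv
    have hdisj : Disjoint S S' := by
      rw [Finset.disjoint_left]
      intro v hv hv'
      have h1 := (Finset.mem_filter.mp hv).2
      have h2 := (Finset.mem_filter.mp hv').2
      exact absurd h2 (not_lt.mpr (le_of_lt h1))
    have hcardSS' : S.card = S'.card := by
      refine Finset.card_bij (fun a _ => nbr a) ?_ ?_ ?_
      · intro a ha
        have haD := (Finset.mem_filter.mp ha).1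
        refine Finset.mem_filter.mpr ⟨nbr_memD a haD, ?_⟩
        rw [nbr_invol a haD]
        exact (Finset.mem_filter.mp ha).2
      · intro a ha b hb hab
        have haD := (Finset.mem_filter.mp ha).1
        have hbD := (Finset.mem_filter.mp hb).1
        have hab' : nbr a = nbr b := hab
        rw [← nbr_invol a haD, ← nbr_invol b hbD, hab']
      · intro b hb
        have hbD := (Finset.mem_filter.mp hb).1
        refine ⟨nbr b, ?_, (nbr_invol b hbD)⟩
        refine Finset.mem_filter.mpr ⟨nbr_memD b hbD, ?_⟩
        rw [nbr_invol b hbD]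
        exact (Finset.mem_filter.mp hb).2
    have hcardD : D.card = 2 * S.card := by
      rw [hunion, Finset.card_union_of_disjoint hdisj, ← hcardSS']
      omega
    have hScard : S.card ≤ (k - 1) / 2 := by
      rw [Nat.le_div_iff_mul_le (by norm_num : 0 < 2)]
      omega
    -- after removing S every vertex has degree 0
    have key : ∀ v ∈ Finset.univ \ S, degOn G (Finset.univ \ S) v = 0 := by
      intro v hv
      rw [degOn, Finset.card_eq_zero, Finset.eq_empty_iff_forall_notMem]
      intro w hw
      obtain ⟨hwA, hadj⟩ := Finset.mem_filter.mp hw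
      have hvS : v ∉ S := (Finset.mem_sdiff.mp hv).2
      have hwS : w ∉ S := (Finset.mem_sdiff.mp hwA).2
      have hvD : v ∈ D := Finset.mem_filter.mpr ⟨mem_univ _, hdeg1 v w hadj⟩
      have hwD : w ∈ D := Finset.mem_filter.mpr ⟨mem_univ _, hdeg1 w v hadj.symm⟩
      have hnv : nbr v = w := nbr_uniq v w hadj
      have hnw : nbr w = v := nbr_uniq w v hadj.symm
      have h1 : ¬ (e v < e (nbr v)) := fun h => hvS (Finset.mem_filter.mpr ⟨hvD, h⟩)
      have h2 : ¬ (e w < e (nbr w)) := fun h => hwS (Finset.mem_filter.mpr ⟨hwD, h⟩)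
      rw [hnv] at h1
      rw [hnw] at h2
      have : e v = e w := le_antisymm (not_lt.mp h2) (not_lt.mp h1)
      exact (G.ne_of_adj hadj) (e.injective this)
    have hmax0 : maxDegOn G (Finset.univ \ S) = 0 := by
      rw [maxDegOn]
      exact Nat.le_zero.mp (Finset.sup_le fun v hv => le_of_eq (key v hv))
    have hfilter : ((Finset.univ \ S).filter
        fun v => degOn G (Finset.univ \ S) v = maxDegOn G (Finset.univ \ S)) =
        Finset.univ \ S := by
      refine Finset.filter_true_of_mem fun v hv => ?_
      rw [key v hv, hmax0]
    have heq : equates G k (Finset.univ \ S) := by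
      by_cases hc : (Finset.univ \ S).card < k
      · exact Or.inl hc
      · right
        rw [hfilter]
        omega
    have : fk G k ≤ S.card := by
      rw [fk, fkOn]
      exact Nat.sInf_le ⟨S, Finset.subset_univ _, rfl, heq⟩
    omega

open scoped Classical in
lemma part2_aux (k : ℕ) (hk : 3 ≤ k) (n : ℕ) (hn : n = 2 * ((k - 1) / 2) + k)
    (G : SimpleGraph (Fin n))
    (hAdj : ∀ i j : Fin n, G.Adj i j ↔ ((i : ℕ) / 2 = (j : ℕ) / 2 ∧
      (i : ℕ) < 2 * ((k - 1) / 2) ∧ (j : ℕ) < 2 * ((k - 1) / 2) ∧ i ≠ j)) :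
    maxDegOn G Finset.univ = 1 ∧ fk G k = (k - 1) / 2 := by
  letI : DecidableEq (Fin n) := fun a b => Classical.propDecidable (a = b)
  set m : ℕ := (k - 1) / 2 with hmdef
  have hm1 : 1 ≤ m := by omega
  have h2m : 2 * m ≤ k - 1 := by omega
  have hndef : n = 2 * m + k := hn
  -- all degrees are at most 1
  have hdeg : ∀ v : Fin n, degOn G Finset.univ v ≤ 1 := by
    intro v
    rw [degOn]
    refine Finset.card_le_one.mpr ?_
    intro a ha b hb
    obtain ⟨h1, h2, h3, h4⟩ := (hAdj v a).mp (Finset.mem_filter.mp ha).2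
    obtain ⟨h1', h2', h3', h4'⟩ := (hAdj v b).mp (Finset.mem_filter.mp hb).2
    have hva : (v : ℕ) ≠ (a : ℕ) := fun h => h4 (Fin.ext h)
    have hvb : (v : ℕ) ≠ (b : ℕ) := fun h => h4' (Fin.ext h)
    exact Fin.ext (by omega)
  have hadj01 : G.Adj ⟨0, by omega⟩ ⟨1, by omega⟩ := by
    rw [hAdj]
    refine ⟨?_, ?_, ?_, ?_⟩
    · show (0 : ℕ) / 2 = 1 / 2
      omega
    · show (0 : ℕ) < 2 * m
      omega
    · show (1 : ℕ) < 2 * m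
      omega
    · exact Fin.ne_of_val_ne (show (0 : ℕ) ≠ 1 by omega)
  have hmax : maxDegOn G Finset.univ = 1 := by
    refine le_antisymm (Finset.sup_le fun v _ => hdeg v) ?_
    have h1 : 1 ≤ degOn G Finset.univ (⟨0, by omega⟩ : Fin n) := by
      rw [degOn]
      exact Finset.card_pos.mpr ⟨⟨1, by omega⟩, Finset.mem_filter.mpr ⟨mem_univ _, hadj01⟩⟩
    exact le_trans h1 (Finset.le_sup (mem_univ _))
  refine ⟨hmax, ?_⟩
  have hub : fk G k ≤ m := part1_aux k (by omega) (Fin n) G (le_of_eq hmax)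
  have hlb : m ≤ fk G k := by
    rw [fk, fkOn]
    refine le_csInf ⟨Finset.univ.card, Finset.univ, Finset.Subset.refl _, rfl, Or.inl ?_⟩ ?_
    · rw [Finset.sdiff_self]
      simp only [Finset.card_empty]
      omega
    · rintro c ⟨S, hSsub, rfl, heq⟩
      by_contra hcon
      push_neg at hcon
      have hcardA : (Finset.univ \ S).card = n - S.card := by
        rw [Finset.card_sdiff_of_subset (Finset.subset_univ S), Finset.card_univ, Fintype.card_fin]
      have hSn : S.card ≤ n := by
        calc S.card ≤ Finset.univ.card := Finset.card_le_univ S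
          _ = n := by rw [Finset.card_univ, Fintype.card_fin]
      rcases heq with hlt | hge
      · omega
      · -- there is an untouched edge
        set T : Finset (Fin n) := S.filter (fun v => (v : ℕ) < 2 * m) with hTdef
        set g : Fin n → ℕ := fun v => (v : ℕ) / 2 with hgdef
        have hnotsub : ¬ (Finset.range m ⊆ T.image g) := by
          intro hsub
          have h1 := Finset.card_le_card hsub
          have h2 := Finset.card_image_le (s := T) (f := g)
          have h3 : T.card ≤ S.card := Finset.card_le_card (Finset.filter_subset _ _)
          rw [Finset.card_range] at h1
          omega
        obtain ⟨t, htmem, htnot⟩ := Finset.not_subset.mp hnotsub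
        have htm : t < m := Finset.mem_range.mp htmem
        set a : Fin n := ⟨2 * t, by omega⟩ with hadef
        set b : Fin n := ⟨2 * t + 1, by omega⟩ with hbdef
        have haS : a ∉ S := by
          intro h
          exact htnot (Finset.mem_image.mpr ⟨a, Finset.mem_filter.mpr
            ⟨h, show 2 * t < 2 * m by omega⟩, show 2 * t / 2 = t by omega⟩)
        have hbS : b ∉ S := by
          intro h
          exact htnot (Finset.mem_image.mpr ⟨b, Finset.mem_filter.mpr
            ⟨h, show 2 * t + 1 < 2 * m by omega⟩, show (2 * t + 1) / 2 = t by omega⟩)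
        have haA : a ∈ Finset.univ \ S := Finset.mem_sdiff.mpr ⟨mem_univ _, haS⟩
        have hbA : b ∈ Finset.univ \ S := Finset.mem_sdiff.mpr ⟨mem_univ _, hbS⟩
        have hadjab : G.Adj a b := by
          rw [hAdj]
          exact ⟨show 2 * t / 2 = (2 * t + 1) / 2 by omega, show 2 * t < 2 * m by omega,
            show 2 * t + 1 < 2 * m by omega,
            Fin.ne_of_val_ne (show 2 * t ≠ 2 * t + 1 by omega)⟩
        have hdegA_le : ∀ v : Fin n, degOn G (Finset.univ \ S) v ≤ 1 := by
          intro v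
          refine le_trans ?_ (hdeg v)
          rw [degOn, degOn]
          exact Finset.card_le_card
            (Finset.filter_subset_filter _ (Finset.sdiff_subset))
        have hmaxA : maxDegOn G (Finset.univ \ S) = 1 := by
          refine le_antisymm (Finset.sup_le fun v _ => hdegA_le v) ?_
          have h1 : 1 ≤ degOn G (Finset.univ \ S) a := by
            rw [degOn]
            exact Finset.card_pos.mpr ⟨b, Finset.mem_filter.mpr ⟨hbA, hadjab⟩⟩
          exact le_trans h1 (Finset.le_sup haA)
        have hsub2 : ((Finset.univ \ S).filter
            fun v => degOn G (Finset.univ \ S) v = maxDegOn G (Finset.univ \ S)) ⊆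
            Finset.univ.filter (fun v : Fin n => (v : ℕ) < 2 * m) := by
          intro v hv
          obtain ⟨hvA, hvdeg⟩ := Finset.mem_filter.mp hv
          rw [hmaxA] at hvdeg
          refine Finset.mem_filter.mpr ⟨mem_univ _, ?_⟩
          by_contra hge2m
          have hzero : degOn G (Finset.univ \ S) v = 0 := by
            rw [degOn, Finset.card_eq_zero, Finset.eq_empty_iff_forall_notMem]
            intro w hw
            obtain ⟨-, h1, h2, -⟩ := (hAdj v w).mp (Finset.mem_filter.mp hw).2
            exact hge2m h1
          omega
        have hcard2m : (Finset.univ.filter (fun v : Fin n => (v : ℕ) < 2 * m)).card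
            ≤ 2 * m := by
          have h := Finset.card_le_card_of_injOn (s := Finset.univ.filter (fun v : Fin n => (v : ℕ) < 2 * m))
            (t := Finset.range (2 * m))
            (fun v : Fin n => (v : ℕ))
            (fun v hv => Finset.mem_range.mpr (Finset.mem_filter.mp hv).2)
            (fun v _ w _ h => Fin.ext h)
          simpa [Finset.card_range] using h
        have hfin := Finset.card_le_card hsub2
        omega
  omega


/-- For every `k ≥ 2` and every finite simple graph `G` with maximum
degree at most `1`, `f_k(G) ≤ ⌊(k-1)/2⌋`; moreover for every `k ≥ 3` there is a graph
with maximum degree exactly `1` and `f_k(G) = ⌊(k-1)/2⌋`. -/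
theorem stmt16 :
    (∀ (k : ℕ), 2 ≤ k → ∀ (V : Type u) [Fintype V] (G : SimpleGraph V),
      maxDegOn G Finset.univ ≤ 1 → fk G k ≤ (k - 1) / 2) ∧
    (∀ (k : ℕ), 3 ≤ k → ∃ (n : ℕ) (G : SimpleGraph (Fin n)),
      maxDegOn G Finset.univ = 1 ∧ fk G k = (k - 1) / 2) := by
  classical
  constructor
  · exact part1_aux
  · intro k hk
    set m : ℕ := (k - 1) / 2 with hmdef
    refine ⟨2 * m + k,
      { Adj := fun i j => (i : ℕ) / 2 = (j : ℕ) / 2 ∧ (i : ℕ) < 2 * m ∧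
          (j : ℕ) < 2 * m ∧ i ≠ j
        symm := by
          constructor
          rintro i j ⟨h1, h2, h3, h4⟩
          exact ⟨h1.symm, h3, h2, h4.symm⟩
        loopless := by
          constructor
          rintro i ⟨_, _, _, h4⟩
          exact h4 rfl }, ?_⟩
    exact part2_aux k hk (2 * m + k) rfl _ (fun i j => Iff.rfl)
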